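/- Let 1/2 < α ≤ 2/3. There exists r₀ > 0 such that the first component u₁ of K ∗ ω^α_+ is nonnegative on B⁺(0;r₀) and ∫_{B⁺(0;r₀)} u₁(x) |ω^α_+(x)|² dx = +∞. In particular, the product (K ∗ ω^α_+) |ω^α_+|² is not locally integrable on ℝ². -/

import Mathlib

open MeasureTheory Real Metric Filter
open scoped ENNReal Topology

/-- The plane `ℝ²` with the Euclidean norm. -/
noncomputable abbrev E2 : Type := EuclideanSpace ℝ (Fin 2)

/-- The 2D Biot–Savart kernel `K(x) = x^⊥ / (2π|x|²)`. -/
noncomputable def K2 (x : E2) : E2 :=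
  (2 * Real.pi * ‖x‖ ^ 2)⁻¹ • (WithLp.equiv 2 (Fin 2 → ℝ)).symm ![-(x 1), x 0]

/-- The velocity field `u = K ∗ ω` obtained from a vorticity `ω` by the Biot–Savart law. -/
noncomputable def vel (ω : E2 → ℝ) (x : E2) : E2 := ∫ y, ω y • K2 (x - y)

/-- The vorticity `ω^α_+`, equal to `1/(|x| |log|x||^α)` on the upper half-disk
`B⁺(0;1/3)` and zero elsewhere. -/
noncomputable def omegaPlus (α : ℝ) (x : E2) : ℝ :=
  if ‖x‖ < 1/3 ∧ 0 < x 1 then 1 / (‖x‖ * |Real.log ‖x‖| ^ α) else 0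

namespace CubicAux

lemma abs_apply_le (v : E2) (i : Fin 2) : |v i| ≤ ‖v‖ := by
  rw [EuclideanSpace.norm_eq]
  rw [← Real.norm_eq_abs, ← Real.sqrt_sq (norm_nonneg (v i))]
  apply Real.sqrt_le_sqrt
  exact Finset.single_le_sum (f := fun j => ‖v j‖ ^ 2) (fun j _ => by positivity) (Finset.mem_univ i)

lemma meas_eval (i : Fin 2) : Measurable fun y : E2 => y i :=
  (EuclideanSpace.proj (𝕜 := ℝ) i).continuous.measurable

lemma ne_zero_of_snd_pos {x : E2} (hx : 0 < x 1) : x ≠ 0 := by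
  intro h; rw [h] at hx; simp at hx

/-- first component of the kernel -/
noncomputable def Kfst (z : E2) : ℝ := (2 * Real.pi * ‖z‖ ^ 2)⁻¹ * (-(z 1))

lemma K2_apply_fst (z : E2) : K2 z 0 = Kfst z := by
  simp [K2, Kfst]

lemma measurable_Kfst : Measurable Kfst := by
  apply Measurable.mul
  · exact ((measurable_const.mul (measurable_norm.pow measurable_const))).inv
  · exact (meas_eval 1).neg

lemma measurable_omegaPlus (α : ℝ) : Measurable (omegaPlus α) := by
  unfold omegaPlus
  apply Measurable.ite
  · exact (measurableSet_lt measurable_norm measurable_const).inter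
      (measurableSet_lt measurable_const (meas_eval 1))
  · apply Measurable.div measurable_const
    exact (measurable_norm.mul ((Real.measurable_log.comp measurable_norm).abs.pow_const α))
  · exact measurable_const

lemma omegaPlus_nonneg (α : ℝ) (y : E2) : 0 ≤ omegaPlus α y := by
  unfold omegaPlus
  split
  · positivity
  · exact le_rfl

lemma omegaPlus_eq_zero_of (α : ℝ) {y : E2} (h : ¬ (‖y‖ < 1/3 ∧ 0 < y 1)) :
    omegaPlus α y = 0 := by unfold omegaPlus; rw [if_neg h]

lemma one_lt_neg_log {t : ℝ} (h0 : 0 < t) (h : t < 1/3) : 1 < -Real.log t := by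
  have h3 : Real.log t < Real.log (1/3) := Real.log_lt_log h0 h
  have : Real.log (1/3) = - Real.log 3 := by rw [one_div, Real.log_inv]
  have hl3 : 1 < Real.log 3 := by
    rw [show (1:ℝ) = Real.log (Real.exp 1) by rw [Real.log_exp]]
    apply Real.log_lt_log (Real.exp_pos 1)
    have := Real.exp_one_lt_d9
    linarith
  linarith

/-- On the support, `ω ≤ ‖y‖⁻¹`. -/
lemma omegaPlus_le_inv_norm {α : ℝ} (hα : 0 ≤ α) (y : E2) : omegaPlus α y ≤ ‖y‖⁻¹ := by
  unfold omegaPlus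
  split
  · rename_i h
    obtain ⟨h1, h2⟩ := h
    have hy0 : 0 < ‖y‖ := norm_pos_iff.mpr (ne_zero_of_snd_pos h2)
    have habs : 1 ≤ |Real.log ‖y‖| := by
      have := one_lt_neg_log hy0 h1
      rw [abs_of_neg (by linarith : Real.log ‖y‖ < 0)]
      linarith
    have hr : 1 ≤ |Real.log ‖y‖| ^ α := Real.one_le_rpow habs hα
    rw [one_div]
    exact inv_anti₀ hy0 (le_mul_of_one_le_right hy0.le hr)
  · positivity

lemma exp_neg_two_lt : Real.exp (-2:ℝ) < 1/3 := by
  rw [Real.exp_neg, inv_lt_comm₀ (Real.exp_pos _) (by norm_num)]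
  rw [show ((1:ℝ)/3)⁻¹ = 3 by norm_num]
  have he : Real.exp 2 = Real.exp 1 * Real.exp 1 := by
    rw [← Real.exp_add]; norm_num
  nlinarith [Real.exp_one_gt_d9]

lemma omegaPlus_ge {α : ℝ} (hα0 : 0 ≤ α) (m : ℕ) (hm : 2 ≤ m) {y : E2}
    (hy1 : Real.exp (-(m:ℝ)-1) ≤ ‖y‖) (hy2 : ‖y‖ ≤ Real.exp (-(m:ℝ)))
    (hys : 0 < y 1) :
    Real.exp (m:ℝ) / ((m:ℝ)+1) ^ α ≤ omegaPlus α y := by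
  have hy0 : 0 < ‖y‖ := lt_of_lt_of_le (Real.exp_pos _) hy1
  have hlt : ‖y‖ < 1/3 := by
    have hm2 : (2:ℝ) ≤ (m:ℝ) := by exact_mod_cast hm
    have h2 : Real.exp (-(m:ℝ)) ≤ Real.exp (-2 : ℝ) := by
      apply Real.exp_le_exp.mpr; linarith
    linarith [exp_neg_two_lt]
  have hneg : Real.log ‖y‖ < 0 := by have := one_lt_neg_log hy0 hlt; linarith
  have habs : |Real.log ‖y‖| ≤ (m:ℝ) + 1 := by
    rw [abs_of_neg hneg]
    have hlow : (-(m:ℝ)-1) ≤ Real.log ‖y‖ := by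
      calc (-(m:ℝ)-1) = Real.log (Real.exp (-(m:ℝ)-1)) := (Real.log_exp _).symm
        _ ≤ Real.log ‖y‖ := Real.log_le_log (Real.exp_pos _) hy1
    linarith
  unfold omegaPlus
  rw [if_pos ⟨hlt, hys⟩]
  have hrp : |Real.log ‖y‖| ^ α ≤ ((m:ℝ)+1) ^ α :=
    Real.rpow_le_rpow (abs_nonneg _) habs hα0
  have habs0 : 0 < |Real.log ‖y‖| := abs_pos.mpr (ne_of_lt hneg)
  have hpos : 0 < ‖y‖ * |Real.log ‖y‖| ^ α := by
    have := Real.rpow_pos_of_pos habs0 α; positivity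
  have key : ‖y‖ * |Real.log ‖y‖| ^ α ≤ Real.exp (-(m:ℝ)) * ((m:ℝ)+1) ^ α :=
    mul_le_mul hy2 hrp (Real.rpow_nonneg (abs_nonneg _) _) (Real.exp_pos _).le
  calc Real.exp (m:ℝ) / ((m:ℝ)+1) ^ α
      = 1 / (Real.exp (-(m:ℝ)) * ((m:ℝ)+1) ^ α) := by
        rw [Real.exp_neg]; field_simp
    _ ≤ 1 / (‖y‖ * |Real.log ‖y‖| ^ α) := one_div_le_one_div_of_le hpos key

lemma E2_volume_ball (c : E2) (r : ℝ) :
    volume (ball c r) = ENNReal.ofReal π * (ENNReal.ofReal r) ^ 2 := by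
  rw [EuclideanSpace.volume_ball]
  have h1 : (Fintype.card (Fin 2)) = 2 := by simp
  rw [h1]
  have h2 : (√π) ^ 2 / Real.Gamma ((2:ℕ) / 2 + 1) = π := by
    push_cast
    rw [show ((2:ℝ)/2 + 1) = 2 by norm_num, Real.Gamma_two,
      Real.sq_sqrt Real.pi_pos.le]
    simp
  rw [h2, mul_comm]

lemma lintegral_inv_ball (c : E2) {R : ℝ} (hR : 0 < R) :
    ∫⁻ y in ball c R, ENNReal.ofReal ‖y - c‖⁻¹ ≤ ENNReal.ofReal (8 * π * R) := by
  set A : ℕ → Set E2 := fun j => {y | R * 2⁻¹ ^ (j+1) ≤ ‖y - c‖ ∧ ‖y - c‖ < R * 2⁻¹ ^ j}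
    with hA
  have hsub : ball c R ⊆ (⋃ j, A j) ∪ {c} := by
    intro y hy
    rcases eq_or_ne y c with h | h
    · exact Or.inr (by simp [h])
    · left
      have h0 : 0 < ‖y - c‖ := by rwa [norm_pos_iff, sub_ne_zero]
      have hyR : ‖y - c‖ < R := by rwa [mem_ball, dist_eq_norm] at hy
      obtain ⟨n, hn1, hn2⟩ := exists_mem_Ico_zpow (x := ‖y-c‖/R) (y := 2)
        (by positivity) one_lt_two
      have hlt1 : ‖y - c‖ / R < 1 := (div_lt_one hR).mpr hyR
      have hn_neg : n < 0 := by
        by_contra hcon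
        push_neg at hcon
        have : (1:ℝ) ≤ (2:ℝ) ^ n := one_le_zpow₀ (by norm_num) hcon
        linarith [hn1]
      set j : ℕ := (-(n+1)).toNat with hj
      have hjn : (j : ℤ) = -(n+1) := Int.toNat_of_nonneg (by omega)
      have e1 : (2:ℝ) ^ n = 2⁻¹ ^ (j+1) := by
        rw [← zpow_natCast (2⁻¹ : ℝ) (j+1), inv_zpow, ← zpow_neg]
        congr 1
        push_cast [hjn]
        ring
      have e2 : (2:ℝ) ^ (n+1) = 2⁻¹ ^ j := by
        rw [← zpow_natCast (2⁻¹ : ℝ) j, inv_zpow, ← zpow_neg]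
        congr 1
        omega
      refine Set.mem_iUnion.mpr ⟨j, ?_, ?_⟩
      · rw [← e1]
        calc R * (2:ℝ)^n ≤ R * (‖y-c‖/R) := by
              apply mul_le_mul_of_nonneg_left hn1 hR.le
          _ = ‖y - c‖ := by field_simp
      · rw [← e2]
        calc ‖y - c‖ = R * (‖y-c‖/R) := by field_simp
          _ < R * (2:ℝ)^(n+1) := by
              apply mul_lt_mul_of_pos_left hn2 hR
  have key : ∀ j : ℕ, ∫⁻ y in A j, ENNReal.ofReal ‖y - c‖⁻¹
      ≤ ENNReal.ofReal (2 * π * R) * (ENNReal.ofReal 2⁻¹) ^ j := by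
    intro j
    have hconst : ∀ y ∈ A j, ENNReal.ofReal ‖y - c‖⁻¹
        ≤ ENNReal.ofReal (R * 2⁻¹ ^ (j+1))⁻¹ := by
      intro y hy
      apply ENNReal.ofReal_le_ofReal
      apply inv_anti₀ (by positivity) hy.1
    calc ∫⁻ y in A j, ENNReal.ofReal ‖y - c‖⁻¹
        ≤ ∫⁻ _ in A j, ENNReal.ofReal (R * 2⁻¹ ^ (j+1))⁻¹ :=
          setLIntegral_mono measurable_const hconst
      _ = ENNReal.ofReal (R * 2⁻¹ ^ (j+1))⁻¹ * volume (A j) := setLIntegral_const _ _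
      _ ≤ ENNReal.ofReal (R * 2⁻¹ ^ (j+1))⁻¹ * volume (ball c (R * 2⁻¹ ^ j)) := by
          apply mul_le_mul_right
          apply measure_mono
          intro y hy
          rw [mem_ball, dist_eq_norm]
          exact hy.2
      _ = ENNReal.ofReal (R * 2⁻¹ ^ (j+1))⁻¹ *
            (ENNReal.ofReal π * (ENNReal.ofReal (R * 2⁻¹ ^ j)) ^ 2) := by
          rw [E2_volume_ball]
      _ = ENNReal.ofReal (2 * π * R) * (ENNReal.ofReal 2⁻¹) ^ j := by
          rw [← ENNReal.ofReal_pow (by positivity), ← ENNReal.ofReal_mul (by positivity),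
            ← ENNReal.ofReal_mul (by positivity), ← ENNReal.ofReal_pow (by norm_num),
            ← ENNReal.ofReal_mul (by positivity)]
          congr 1
          field_simp
          ring
  calc ∫⁻ y in ball c R, ENNReal.ofReal ‖y - c‖⁻¹
      ≤ ∫⁻ y in (⋃ j, A j) ∪ {c}, ENNReal.ofReal ‖y - c‖⁻¹ := lintegral_mono_set hsub
    _ ≤ (∫⁻ y in (⋃ j, A j), ENNReal.ofReal ‖y - c‖⁻¹)
        + ∫⁻ y in ({c} : Set E2), ENNReal.ofReal ‖y - c‖⁻¹ := lintegral_union_le _ _ _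
    _ ≤ (∑' j, ∫⁻ y in A j, ENNReal.ofReal ‖y - c‖⁻¹) + 0 := by
        apply add_le_add (lintegral_iUnion_le _ _)
        rw [setLIntegral_measure_zero _ _ (measure_singleton c)]
    _ ≤ (∑' j, ENNReal.ofReal (2 * π * R) * (ENNReal.ofReal 2⁻¹) ^ j) + 0 := by
        apply add_le_add_left (ENNReal.tsum_le_tsum key)
    _ = ENNReal.ofReal (2 * π * R) * (1 - ENNReal.ofReal 2⁻¹)⁻¹ := by
        rw [add_zero, ENNReal.tsum_mul_left, ENNReal.tsum_geometric]
    _ ≤ ENNReal.ofReal (8 * π * R) := by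
        have h12 : ENNReal.ofReal 2⁻¹ = (2:ℝ≥0∞)⁻¹ := by
          rw [show (2⁻¹:ℝ) = 1/2 by norm_num, ENNReal.ofReal_div_of_pos] <;> norm_num
        rw [h12, ENNReal.one_sub_inv_two, inv_inv]
        rw [show (2:ℝ≥0∞) = ENNReal.ofReal 2 by simp, ← ENNReal.ofReal_mul (by positivity)]
        exact ENNReal.ofReal_le_ofReal (by nlinarith [Real.pi_pos])

lemma volume_rect {a b : ℝ} (ha : 0 ≤ a) (hb : 0 ≤ b) :
    volume {y : E2 | |y 0| < a ∧ y 1 ∈ Set.Ioo 0 b} ≤ ENNReal.ofReal (2*a*b) := by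
  have φpres := (EuclideanSpace.volume_preserving_symm_measurableEquiv_toLp (Fin 2)).trans
    (volume_preserving_finTwoArrow ℝ)
  set φ := (MeasurableEquiv.toLp 2 (Fin 2 → ℝ)).symm.trans
    (MeasurableEquiv.finTwoArrow (α := ℝ)) with hφ
  have happ : ∀ y : E2, φ y = (y 0, y 1) := fun y => rfl
  have hset : {y : E2 | |y 0| < a ∧ y 1 ∈ Set.Ioo 0 b}
      = φ ⁻¹' (Set.Ioo (-a) a ×ˢ Set.Ioo 0 b) := by
    ext y
    simp [happ, abs_lt, Set.mem_Ioo, and_assoc]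
  rw [hset, φpres.measure_preimage
    ((measurableSet_Ioo.prod measurableSet_Ioo)).nullMeasurableSet]
  rw [Measure.volume_eq_prod, Measure.prod_prod, Real.volume_Ioo, Real.volume_Ioo]
  rw [← ENNReal.ofReal_mul (by linarith)]
  apply ENNReal.ofReal_le_ofReal
  nlinarith

lemma tsum_harmonic_top {c : ℝ} (hc : 0 < c) :
    ∑' n : ℕ, ENNReal.ofReal (c / ((n:ℝ)+1)) = ⊤ := by
  apply ENNReal.eq_top_of_forall_nnreal_le
  intro r
  have hdiv : Tendsto (fun n => ∑ i ∈ Finset.range n, 1/((i:ℝ)+1)) atTop atTop :=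
    tendsto_sum_range_one_div_nat_succ_atTop
  obtain ⟨N, hN⟩ := (hdiv.eventually_ge_atTop ((r:ℝ)/c)).exists
  calc (r : ℝ≥0∞) = ENNReal.ofReal (r:ℝ) := ENNReal.ofReal_coe_nnreal.symm
    _ ≤ ENNReal.ofReal (c * ∑ i ∈ Finset.range N, 1/((i:ℝ)+1)) := by
        apply ENNReal.ofReal_le_ofReal
        rw [div_le_iff₀' hc] at hN
        exact hN
    _ = ∑ i ∈ Finset.range N, ENNReal.ofReal (c / ((i:ℝ)+1)) := by
        rw [Finset.mul_sum, ENNReal.ofReal_sum_of_nonneg]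
        · congr 1; ext i; rw [mul_one_div]
        · intro i _; positivity
    _ ≤ ∑' n : ℕ, ENNReal.ofReal (c / ((n:ℝ)+1)) := ENNReal.sum_le_tsum _

lemma norm_K2 (z : E2) : ‖K2 z‖ = (2*π*‖z‖^2)⁻¹ * ‖z‖ := by
  unfold K2
  rw [norm_smul]
  have h1 : ‖(WithLp.equiv 2 (Fin 2 → ℝ)).symm ![-(z 1), z 0]‖ = ‖z‖ := by
    rw [EuclideanSpace.norm_eq, EuclideanSpace.norm_eq]
    congr 1
    rw [Fin.sum_univ_two, Fin.sum_univ_two]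
    simp [Real.norm_eq_abs, sq_abs]
    ring
  rw [h1, Real.norm_eq_abs, abs_of_nonneg (by positivity)]

lemma inv_sq_mul_self {t : ℝ} (ht : 0 ≤ t) : (2*π*t^2)⁻¹ * t = (2*π*t)⁻¹ := by
  rcases eq_or_lt_of_le ht with h | h
  · rw [← h]; simp
  · field_simp

lemma measurable_K2 : Measurable K2 := by
  have : K2 = (MeasurableEquiv.toLp 2 (Fin 2 → ℝ)) ∘ (fun z : E2 => fun i : Fin 2 => K2 z i) := by
    funext z; rfl
  rw [this]
  apply (MeasurableEquiv.toLp 2 (Fin 2 → ℝ)).measurable.comp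
  apply measurable_pi_lambda
  intro i
  fin_cases i
  · simpa [K2_apply_fst] using measurable_Kfst
  · show Measurable fun z : E2 => K2 z 1
    have : (fun z : E2 => K2 z 1) = fun z : E2 => (2*π*‖z‖^2)⁻¹ * (z 0) := by
      funext z; simp [K2]
    rw [this]
    exact ((measurable_const.mul (measurable_norm.pow measurable_const))).inv.mul (meas_eval 0)

lemma omega_props {α : ℝ} {y : E2} (h : omegaPlus α y ≠ 0) :
    ‖y‖ < 1/3 ∧ 0 < y 1 ∧ 0 < ‖y‖ := by
  by_cases hc : ‖y‖ < 1/3 ∧ 0 < y 1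
  · exact ⟨hc.1, hc.2, norm_pos_iff.mpr (ne_zero_of_snd_pos hc.2)⟩
  · exact absurd (omegaPlus_eq_zero_of α hc) h

lemma integrableOn_inv_ball (c : E2) {R : ℝ} (hR : 0 < R) :
    IntegrableOn (fun y : E2 => ‖y - c‖⁻¹) (ball c R) := by
  constructor
  · exact ((measurable_id.sub measurable_const).norm.inv).aestronglyMeasurable
  · rw [hasFiniteIntegral_iff_norm]
    calc ∫⁻ y in ball c R, ENNReal.ofReal ‖‖y - c‖⁻¹‖
        = ∫⁻ y in ball c R, ENNReal.ofReal ‖y - c‖⁻¹ := by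
          congr 1; funext y; rw [Real.norm_eq_abs, abs_of_nonneg (by positivity)]
      _ ≤ ENNReal.ofReal (8 * π * R) := lintegral_inv_ball c hR
      _ < ⊤ := ENNReal.ofReal_lt_top

/-- The dominating function for the Biot-Savart integrand. -/
lemma integrand_bound {α : ℝ} (hα : 0 ≤ α) (x : E2) (hx : 0 < ‖x‖) (y : E2) :
    ‖omegaPlus α y • K2 (x - y)‖ ≤
      (π*‖x‖)⁻¹ * ((ball (0:E2) (1/3)).indicator (fun y => ‖y - 0‖⁻¹) y
        + (ball x (‖x‖/2)).indicator (fun y => ‖y - x‖⁻¹) y) := by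
  have hind : ∀ (s : Set E2) (c : E2) (z : E2), 0 ≤ s.indicator (fun y => ‖y - c‖⁻¹) z := by
    intro s c z
    apply Set.indicator_nonneg
    intro _ _; positivity
  rcases eq_or_ne (omegaPlus α y) 0 with h0 | h0
  · rw [h0, zero_smul, norm_zero]
    have := hind (ball (0:E2)  (1/3)) 0 y
    have := hind (ball x (‖x‖/2)) x y
    positivity
  obtain ⟨hy3, hy1, hy0⟩ := omega_props h0
  rw [norm_smul, Real.norm_eq_abs, abs_of_nonneg (omegaPlus_nonneg α y), norm_K2,
    inv_sq_mul_self (norm_nonneg _)]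
  rcases lt_or_ge ‖x - y‖ (‖x‖/2) with hc | hc
  · -- near x
    have hyx : ‖x‖/2 < ‖y‖ := by
      have := norm_sub_norm_le x y
      linarith [abs_le.mp (abs_norm_sub_norm_le x y)]
    have hω : omegaPlus α y ≤ (‖x‖/2)⁻¹ :=
      (omegaPlus_le_inv_norm hα y).trans (inv_anti₀ (by linarith) hyx.le)
    have hmem : y ∈ ball x (‖x‖/2) := by
      rw [mem_ball, dist_eq_norm, norm_sub_rev]; exact hc
    rw [Set.indicator_of_mem hmem]
    have h2 : (2*π*‖x-y‖)⁻¹ ≤ (2*π)⁻¹ * ‖y - x‖⁻¹ := by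
      rw [norm_sub_rev x y, mul_inv]
    calc omegaPlus α y * (2*π*‖x-y‖)⁻¹ ≤ (‖x‖/2)⁻¹ * ((2*π)⁻¹ * ‖y - x‖⁻¹) := by
          apply mul_le_mul hω h2 (by positivity) (by positivity)
      _ = (π*‖x‖)⁻¹ * ‖y - x‖⁻¹ := by
          rw [norm_sub_rev x y] at *
          field_simp
      _ ≤ _ := by
          have := hind (ball (0:E2) (1/3)) 0 y
          have hh : (0:ℝ) ≤ (π*‖x‖)⁻¹ := by positivity
          nlinarith [hind (ball (0:E2) (1/3)) 0 y]
  · -- far from x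
    have hω : omegaPlus α y ≤ ‖y‖⁻¹ := omegaPlus_le_inv_norm hα y
    have hmem : y ∈ ball (0:E2) (1/3) := by
      rw [mem_ball, dist_eq_norm, sub_zero]; exact hy3
    rw [Set.indicator_of_mem hmem]
    have h2 : (2*π*‖x-y‖)⁻¹ ≤ (2*π*(‖x‖/2))⁻¹ := by
      apply inv_anti₀ (by positivity)
      have := Real.pi_pos
      nlinarith
    calc omegaPlus α y * (2*π*‖x-y‖)⁻¹ ≤ ‖y‖⁻¹ * (2*π*(‖x‖/2))⁻¹ := by
          apply mul_le_mul hω h2 (by positivity) (by positivity)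
      _ = (π*‖x‖)⁻¹ * ‖y - 0‖⁻¹ := by
          rw [sub_zero]
          field_simp
      _ ≤ _ := by
          nlinarith [hind (ball x (‖x‖/2)) x y, (show (0:ℝ) ≤ (π*‖x‖)⁻¹ by positivity)]

lemma integrable_omega_smul {α : ℝ} (hα : 0 ≤ α) (x : E2) (hx : 0 < ‖x‖) :
    Integrable (fun y => omegaPlus α y • K2 (x - y)) volume := by
  apply Integrable.mono' (g := fun y => (π*‖x‖)⁻¹ *
    ((ball (0:E2) (1/3)).indicator (fun y => ‖y - 0‖⁻¹) y
      + (ball x (‖x‖/2)).indicator (fun y => ‖y - x‖⁻¹) y))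
  · apply Integrable.const_mul
    apply Integrable.add
    · exact (integrableOn_inv_ball (0:E2) (by norm_num)).integrable_indicator measurableSet_ball
    · exact (integrableOn_inv_ball x (by positivity)).integrable_indicator measurableSet_ball
  · apply Measurable.aestronglyMeasurable
    exact (measurable_omegaPlus α).smul (measurable_K2.comp (measurable_const.sub measurable_id))
  · exact Filter.Eventually.of_forall (integrand_bound hα x hx)

lemma integrable_F {α : ℝ} (hα : 0 ≤ α) (x : E2) (hx : 0 < ‖x‖) :
    Integrable (fun y => omegaPlus α y * Kfst (x - y)) volume := by
  have h := (EuclideanSpace.proj (0 : Fin 2) (𝕜 := ℝ)).integrable_comp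
    (integrable_omega_smul hα x hx)
  have : (fun y => (EuclideanSpace.proj (0 : Fin 2) (𝕜 := ℝ)) (omegaPlus α y • K2 (x - y)))
      = fun y => omegaPlus α y * Kfst (x - y) := by
    funext y
    show (omegaPlus α y • K2 (x - y)) 0 = _
    simp only [PiLp.smul_apply, smul_eq_mul]
    rw [K2_apply_fst]
  rwa [this] at h

lemma vel_fst_eq {α : ℝ} (hα : 0 ≤ α) (x : E2) (hx : 0 < ‖x‖) :
    vel (omegaPlus α) x 0 = ∫ y, omegaPlus α y * Kfst (x - y) := by
  have h := (EuclideanSpace.proj (0 : Fin 2) (𝕜 := ℝ)).integral_comp_comm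
    (integrable_omega_smul hα x hx)
  unfold vel
  rw [show (∫ y, omegaPlus α y • K2 (x - y)) 0
    = (EuclideanSpace.proj (0 : Fin 2) (𝕜 := ℝ)) (∫ y, omegaPlus α y • K2 (x - y)) from rfl]
  rw [← h]
  congr 1

lemma ofReal_half : ENNReal.ofReal 2⁻¹ = (2:ℝ≥0∞)⁻¹ := by
  rw [show (2⁻¹:ℝ) = 1/2 by norm_num, ENNReal.ofReal_div_of_pos] <;> norm_num

lemma tsum_geom_half (C : ℝ) :
    (∑' k:ℕ, ENNReal.ofReal C * (ENNReal.ofReal 2⁻¹)^k) = ENNReal.ofReal C * 2 := by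
  rw [ENNReal.tsum_mul_left, ENNReal.tsum_geometric, ofReal_half, ENNReal.one_sub_inv_two,
    inv_inv]

lemma absF_eq {α : ℝ} (x y : E2) :
    |omegaPlus α y * Kfst (x - y)|
      = omegaPlus α y * (|x 1 - y 1| * (2*π*‖x-y‖^2)⁻¹) := by
  have hπ := Real.pi_pos
  rw [abs_mul, abs_of_nonneg (omegaPlus_nonneg α y)]
  congr 1
  unfold Kfst
  have h1 : |(-((x - y) 1))| = |x 1 - y 1| := by
    simp [abs_sub_comm]
  rw [abs_mul, h1, abs_of_nonneg (a := (2*π*‖x-y‖^2)⁻¹) (by positivity), mul_comm]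

lemma absF_le_kernel {α : ℝ} (x y : E2) :
    |omegaPlus α y * Kfst (x - y)| ≤ omegaPlus α y * (2*π*‖x-y‖)⁻¹ := by
  rw [absF_eq]
  apply mul_le_mul_of_nonneg_left ?_ (omegaPlus_nonneg α y)
  calc |x 1 - y 1| * (2*π*‖x-y‖^2)⁻¹ ≤ ‖x-y‖ * (2*π*‖x-y‖^2)⁻¹ := by
        apply mul_le_mul_of_nonneg_right ?_ (by positivity)
        have h := abs_apply_le (x - y) 1
        simpa using h
    _ = (2*π*‖x-y‖)⁻¹ := by rw [mul_comm]; exact inv_sq_mul_self (norm_nonneg _)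

lemma err_neg_region {α : ℝ} (hα : 0 ≤ α) {x : E2} (hx : 0 < ‖x‖) (hx1 : 0 < x 1) :
    ∫⁻ y in {y : E2 | y 1 < x 1}, ENNReal.ofReal |omegaPlus α y * Kfst (x - y)| ≤
      ENNReal.ofReal 25 := by
  have hπ := Real.pi_pos
  have hx1n : x 1 ≤ ‖x‖ := le_trans (le_abs_self _) (abs_apply_le x 1)
  set f : E2 → ℝ≥0∞ := fun y => ENNReal.ofReal |omegaPlus α y * Kfst (x - y)| with hf
  set N : Set E2 := {y : E2 | y 1 < x 1} with hN
  set V1 : Set E2 := {y : E2 | 2*‖x‖ ≤ ‖y‖} with hV1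
  set V2 : Set E2 := {y : E2 | ‖y‖ < 2*‖x‖ ∧ ‖x‖/2 ≤ ‖x - y‖} with hV2
  set V3 : Set E2 := {y : E2 | ‖x - y‖ < ‖x‖/2} with hV3
  have hcover : N ⊆ (N ∩ V1) ∪ ((N ∩ V2) ∪ (N ∩ V3)) := by
    intro y hy
    rcases le_or_gt (2*‖x‖) ‖y‖ with h1 | h1
    · exact Or.inl ⟨hy, h1⟩
    rcases le_or_gt (‖x‖/2) ‖x - y‖ with h2 | h2
    · exact Or.inr (Or.inl ⟨hy, h1, h2⟩)
    · exact Or.inr (Or.inr ⟨hy, h2⟩)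
  -- Piece V3
  have hpiece3 : ∫⁻ y in N ∩ V3, f y ≤ ENNReal.ofReal 4 := by
    have hpt : ∀ y ∈ N ∩ V3, f y ≤ ENNReal.ofReal ((π*‖x‖)⁻¹ * ‖y - x‖⁻¹) := by
      intro y hy
      apply ENNReal.ofReal_le_ofReal
      have h2 : ‖x‖/2 < ‖y‖ := by
        have h := abs_le.mp (abs_norm_sub_norm_le x y)
        have := hy.2
        rw [hV3, Set.mem_setOf_eq] at this
        linarith [h.1]
      have hω : omegaPlus α y ≤ (‖x‖/2)⁻¹ :=
        (omegaPlus_le_inv_norm hα y).trans (inv_anti₀ (by linarith) h2.le)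
      calc |omegaPlus α y * Kfst (x - y)| ≤ omegaPlus α y * (2*π*‖x-y‖)⁻¹ :=
            absF_le_kernel x y
        _ = omegaPlus α y * ((2*π)⁻¹ * ‖x-y‖⁻¹) := by rw [mul_inv]
        _ ≤ (‖x‖/2)⁻¹ * ((2*π)⁻¹ * ‖x-y‖⁻¹) :=
            mul_le_mul_of_nonneg_right hω (by positivity)
        _ = (π*‖x‖)⁻¹ * ‖y - x‖⁻¹ := by rw [norm_sub_rev]; field_simp
    calc ∫⁻ y in N ∩ V3, f y
        ≤ ∫⁻ y in N ∩ V3, ENNReal.ofReal ((π*‖x‖)⁻¹ * ‖y - x‖⁻¹) :=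
          setLIntegral_mono (by
            apply Measurable.ennreal_ofReal
            exact measurable_const.mul ((measurable_id.sub measurable_const).norm.inv)) hpt
      _ ≤ ∫⁻ y in ball x (‖x‖/2), ENNReal.ofReal ((π*‖x‖)⁻¹ * ‖y - x‖⁻¹) := by
          apply lintegral_mono_set
          intro y hy
          rw [mem_ball, dist_eq_norm, norm_sub_rev]
          exact hy.2
      _ = ENNReal.ofReal ((π*‖x‖)⁻¹) * ∫⁻ y in ball x (‖x‖/2), ENNReal.ofReal (‖y - x‖⁻¹) := by
          rw [← lintegral_const_mul' _ _ ENNReal.ofReal_ne_top]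
          congr 1; funext y
          rw [← ENNReal.ofReal_mul (by positivity)]
      _ ≤ ENNReal.ofReal ((π*‖x‖)⁻¹) * ENNReal.ofReal (8*π*(‖x‖/2)) :=
          mul_le_mul_right (lintegral_inv_ball x (by positivity)) _
      _ = ENNReal.ofReal ((π*‖x‖)⁻¹ * (8*π*(‖x‖/2))) := by
          rw [← ENNReal.ofReal_mul (by positivity)]
      _ = ENNReal.ofReal 4 := by congr 1; field_simp; ring
  -- Piece V2
  have hpiece2 : ∫⁻ y in N ∩ V2, f y ≤ ENNReal.ofReal 16 := by
    have hpt : ∀ y ∈ N ∩ V2, f y ≤ ENNReal.ofReal ((π*‖x‖)⁻¹ * ‖y - 0‖⁻¹) := by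
      intro y hy
      apply ENNReal.ofReal_le_ofReal
      obtain ⟨_, hy1, hy2⟩ := hy
      calc |omegaPlus α y * Kfst (x - y)| ≤ omegaPlus α y * (2*π*‖x-y‖)⁻¹ :=
            absF_le_kernel x y
        _ ≤ ‖y‖⁻¹ * (2*π*(‖x‖/2))⁻¹ := by
            apply mul_le_mul (omegaPlus_le_inv_norm hα y) ?_ (by positivity) (by positivity)
            apply inv_anti₀ (by positivity)
            nlinarith
        _ = (π*‖x‖)⁻¹ * ‖y - 0‖⁻¹ := by rw [sub_zero]; field_simp
    calc ∫⁻ y in N ∩ V2, f y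
        ≤ ∫⁻ y in N ∩ V2, ENNReal.ofReal ((π*‖x‖)⁻¹ * ‖y - 0‖⁻¹) :=
          setLIntegral_mono (by
            apply Measurable.ennreal_ofReal
            exact measurable_const.mul ((measurable_id.sub measurable_const).norm.inv)) hpt
      _ ≤ ∫⁻ y in ball (0:E2) (2*‖x‖), ENNReal.ofReal ((π*‖x‖)⁻¹ * ‖y - 0‖⁻¹) := by
          apply lintegral_mono_set
          intro y hy
          rw [mem_ball, dist_eq_norm, sub_zero]
          exact hy.2.1
      _ = ENNReal.ofReal ((π*‖x‖)⁻¹) * ∫⁻ y in ball (0:E2) (2*‖x‖), ENNReal.ofReal (‖y - 0‖⁻¹) := by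
          rw [← lintegral_const_mul' _ _ ENNReal.ofReal_ne_top]
          congr 1; funext y
          rw [← ENNReal.ofReal_mul (by positivity)]
      _ ≤ ENNReal.ofReal ((π*‖x‖)⁻¹) * ENNReal.ofReal (8*π*(2*‖x‖)) :=
          mul_le_mul_right (lintegral_inv_ball (0:E2) (by positivity)) _
      _ = ENNReal.ofReal ((π*‖x‖)⁻¹ * (8*π*(2*‖x‖))) := by
          rw [← ENNReal.ofReal_mul (by positivity)]
      _ = ENNReal.ofReal 16 := by congr 1; field_simp; ring
  -- Piece V1
  have hpiece1 : ∫⁻ y in N ∩ V1, f y ≤ ENNReal.ofReal 5 := by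
    set B : ℕ → Set E2 := fun k =>
      {y : E2 | (2*‖x‖)*2^k ≤ ‖y‖ ∧ ‖y‖ < (2*‖x‖)*2^(k+1) ∧ 0 < y 1 ∧ y 1 < x 1} with hB
    set Z : Set E2 := {y : E2 | omegaPlus α y = 0} with hZ
    have hsub : N ∩ V1 ⊆ (⋃ k, B k) ∪ Z := by
      rintro y ⟨hyN, hyV⟩
      rcases eq_or_ne (omegaPlus α y) 0 with h0 | h0
      · exact Or.inr h0
      obtain ⟨hy3, hy1, hy0⟩ := omega_props h0
      left
      have hs1 : (1:ℝ) ≤ ‖y‖/(2*‖x‖) := by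
        rw [le_div_iff₀ (by positivity)]
        rw [hV1, Set.mem_setOf_eq] at hyV
        linarith
      obtain ⟨n, hn1, hn2⟩ := exists_mem_Ico_zpow (x := ‖y‖/(2*‖x‖)) (y := 2)
        (by positivity) one_lt_two
      have hn0 : 0 ≤ n := by
        by_contra hcon
        push_neg at hcon
        have hle : (2:ℝ)^(n+1) ≤ 2^(0:ℤ) := by
          apply zpow_le_zpow_right₀ (by norm_num) (by omega)
        rw [zpow_zero] at hle
        linarith
      set k : ℕ := n.toNat with hk
      have hkn : (k:ℤ) = n := Int.toNat_of_nonneg hn0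
      have e1 : (2:ℝ)^n = 2^k := by rw [← zpow_natCast (2:ℝ) k, hkn]
      have e2 : (2:ℝ)^(n+1) = 2^(k+1) := by
        rw [← zpow_natCast (2:ℝ) (k+1)]
        congr 1
        omega
      refine Set.mem_iUnion.mpr ⟨k, ?_, ?_, hy1, hyN⟩
      · rw [← e1]
        calc (2*‖x‖)*(2:ℝ)^n ≤ (2*‖x‖)*(‖y‖/(2*‖x‖)) :=
              mul_le_mul_of_nonneg_left hn1 (by positivity)
          _ = ‖y‖ := by field_simp
      · rw [← e2]
        calc ‖y‖ = (2*‖x‖)*(‖y‖/(2*‖x‖)) := by field_simp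
          _ < (2*‖x‖)*(2:ℝ)^(n+1) := mul_lt_mul_of_pos_left hn2 (by positivity)
    have hZ0 : ∫⁻ y in Z, f y ≤ 0 := by
      have : ∀ y ∈ Z, f y ≤ 0 := by
        intro y hy
        simp only [hZ, Set.mem_setOf_eq] at hy
        show ENNReal.ofReal |omegaPlus α y * Kfst (x - y)| ≤ 0
        rw [hy]
        simp
      calc ∫⁻ y in Z, f y ≤ ∫⁻ _ in Z, 0 := setLIntegral_mono measurable_const this
        _ = 0 := by simp
    have hterm : ∀ k : ℕ, ∫⁻ y in B k, f y
        ≤ ENNReal.ofReal (2/π) * (ENNReal.ofReal 2⁻¹)^k := by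
      intro k
      have hpt : ∀ y ∈ B k, f y ≤ ENNReal.ofReal (2*‖x‖/π * (((2*‖x‖)*2^k)^3)⁻¹) := by
        intro y hy
        obtain ⟨hk1, hk2, hk3, hk4⟩ := hy
        apply ENNReal.ofReal_le_ofReal
        have hyn : 0 < ‖y‖ := lt_of_lt_of_le (by positivity) hk1
        have hxy : ‖y‖/2 ≤ ‖x - y‖ := by
          have h := abs_le.mp (abs_norm_sub_norm_le x y)
          have h1k : (1:ℝ) ≤ 2^k := one_le_pow₀ (by norm_num)
          have h2x : 2*‖x‖ ≤ ‖y‖ := le_trans (by nlinarith) hk1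
          linarith [h.1]
        have habs1 : |x 1 - y 1| ≤ ‖x‖ := by
          rw [abs_of_pos (by linarith)]
          linarith
        rw [absF_eq]
        calc omegaPlus α y * (|x 1 - y 1| * (2*π*‖x-y‖^2)⁻¹)
            ≤ ‖y‖⁻¹ * (‖x‖ * (2*π*(‖y‖/2)^2)⁻¹) := by
              apply mul_le_mul (omegaPlus_le_inv_norm hα y) ?_ (by positivity) (by positivity)
              apply mul_le_mul habs1 ?_ (by positivity) (norm_nonneg x)
              apply inv_anti₀ (by positivity)
              have hsq : (‖y‖/2)^2 ≤ ‖x-y‖^2 := pow_le_pow_left₀ (by positivity) hxy 2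
              nlinarith
          _ = 2*‖x‖/π * ((‖y‖^3)⁻¹) := by field_simp
          _ ≤ 2*‖x‖/π * ((((2*‖x‖)*2^k)^3)⁻¹) := by
              apply mul_le_mul_of_nonneg_left ?_ (by positivity)
              apply inv_anti₀ (by positivity)
              exact pow_le_pow_left₀ (by positivity) hk1 3
      have hvol : volume (B k) ≤ ENNReal.ofReal (2*((2*‖x‖)*2^(k+1))*‖x‖) := by
        refine le_trans (measure_mono ?_) (volume_rect (by positivity) (norm_nonneg x))
        rintro y ⟨hk1, hk2, hk3, hk4⟩
        constructor
        · calc |y 0| ≤ ‖y‖ := abs_apply_le y 0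
            _ < (2*‖x‖)*2^(k+1) := hk2
        · exact ⟨hk3, lt_of_lt_of_le hk4 hx1n⟩
      have hBmeas : MeasurableSet (B k) := by
        apply MeasurableSet.inter
        · exact measurableSet_le measurable_const measurable_norm
        apply MeasurableSet.inter
        · exact measurableSet_lt measurable_norm measurable_const
        apply MeasurableSet.inter
        · exact measurableSet_lt measurable_const (meas_eval 1)
        · exact measurableSet_lt (meas_eval 1) measurable_const
      calc ∫⁻ y in B k, f y ≤ ∫⁻ _ in B k, ENNReal.ofReal (2*‖x‖/π * (((2*‖x‖)*2^k)^3)⁻¹) :=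
            setLIntegral_mono measurable_const hpt
        _ = ENNReal.ofReal (2*‖x‖/π * (((2*‖x‖)*2^k)^3)⁻¹) * volume (B k) :=
            setLIntegral_const _ _
        _ ≤ ENNReal.ofReal (2*‖x‖/π * (((2*‖x‖)*2^k)^3)⁻¹)
              * ENNReal.ofReal (2*((2*‖x‖)*2^(k+1))*‖x‖) := mul_le_mul_right hvol _
        _ = ENNReal.ofReal ((2*‖x‖/π * (((2*‖x‖)*2^k)^3)⁻¹) * (2*((2*‖x‖)*2^(k+1))*‖x‖)) := by
            rw [← ENNReal.ofReal_mul (by positivity)]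
        _ ≤ ENNReal.ofReal ((2/π) * (2⁻¹)^k) := by
            apply ENNReal.ofReal_le_ofReal
            have h2k : (0:ℝ) < 2^k := by positivity
            have h1k : (1:ℝ) ≤ 2^k := one_le_pow₀ (by norm_num)
            have hxne : ‖x‖ ≠ 0 := ne_of_gt hx
            have heq : 2*‖x‖/π * (((2*‖x‖)*2^k)^3)⁻¹ * (2*((2*‖x‖)*2^(k+1))*‖x‖)
                = 2/π * ((2^k)*(2^k))⁻¹ := by
              field_simp
              ring
            rw [heq, inv_pow]
            apply mul_le_mul_of_nonneg_left ?_ (by positivity)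
            apply inv_anti₀ (by positivity)
            nlinarith
        _ = ENNReal.ofReal (2/π) * (ENNReal.ofReal 2⁻¹)^k := by
            rw [ENNReal.ofReal_mul (by positivity), ENNReal.ofReal_pow (by norm_num)]
    calc ∫⁻ y in N ∩ V1, f y ≤ ∫⁻ y in (⋃ k, B k) ∪ Z, f y := lintegral_mono_set hsub
      _ ≤ (∫⁻ y in (⋃ k, B k), f y) + ∫⁻ y in Z, f y := lintegral_union_le _ _ _
      _ ≤ (∑' k, ∫⁻ y in B k, f y) + 0 := add_le_add (lintegral_iUnion_le _ _) hZ0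
      _ ≤ (∑' k, ENNReal.ofReal (2/π) * (ENNReal.ofReal 2⁻¹)^k) + 0 :=
          add_le_add_left (ENNReal.tsum_le_tsum hterm) 0
      _ = ENNReal.ofReal (2/π) * 2 := by rw [add_zero, tsum_geom_half]
      _ ≤ ENNReal.ofReal 5 := by
          rw [show (2:ℝ≥0∞) = ENNReal.ofReal 2 by simp, ← ENNReal.ofReal_mul (by positivity)]
          apply ENNReal.ofReal_le_ofReal
          rw [div_mul_eq_mul_div, div_le_iff₀ hπ]
          nlinarith [Real.pi_gt_three]
  calc ∫⁻ y in N, f y ≤ ∫⁻ y in (N ∩ V1) ∪ ((N ∩ V2) ∪ (N ∩ V3)), f y :=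
        lintegral_mono_set hcover
    _ ≤ (∫⁻ y in N ∩ V1, f y) + ((∫⁻ y in N ∩ V2, f y) + (∫⁻ y in N ∩ V3, f y)) :=
        le_trans (lintegral_union_le _ _ _) (add_le_add_right (lintegral_union_le _ _ _) _)
    _ ≤ ENNReal.ofReal 5 + (ENNReal.ofReal 16 + ENNReal.ofReal 4) :=
        add_le_add hpiece1 (add_le_add hpiece2 hpiece3)
    _ = ENNReal.ofReal 25 := by
        rw [← ENNReal.ofReal_add (by norm_num) (by norm_num),
          ← ENNReal.ofReal_add (by norm_num) (by norm_num)]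
        norm_num

/-- center of the `m`-th positive ball -/
noncomputable def ptm (m : ℕ) : E2 :=
  (WithLp.equiv 2 (Fin 2 → ℝ)).symm ![0, (3/4)*Real.exp (-(m:ℝ))]

/-- the `m`-th positive ball -/
noncomputable def Dm (m : ℕ) : Set E2 := ball (ptm m) (Real.exp (-(m:ℝ))/8)

lemma ptm_apply0 (m : ℕ) : ptm m 0 = 0 := rfl
lemma ptm_apply1 (m : ℕ) : ptm m 1 = (3/4)*Real.exp (-(m:ℝ)) := rfl

lemma norm_ptm (m : ℕ) : ‖ptm m‖ = (3/4)*Real.exp (-(m:ℝ)) := by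
  rw [EuclideanSpace.norm_eq, Fin.sum_univ_two]
  rw [show (ptm m 0) = 0 from rfl, show (ptm m 1) = (3/4)*Real.exp (-(m:ℝ)) from rfl]
  simp [Real.norm_eq_abs, sq_abs]
  rw [Real.sqrt_sq (by positivity)]

lemma Dm_props {m : ℕ} {y : E2} (hy : y ∈ Dm m) :
    (5/8)*Real.exp (-(m:ℝ)) ≤ ‖y‖ ∧ ‖y‖ ≤ (7/8)*Real.exp (-(m:ℝ))
      ∧ (5/8)*Real.exp (-(m:ℝ)) ≤ y 1 := by
  have hd : ‖y - ptm m‖ < Real.exp (-(m:ℝ))/8 := by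
    rw [Dm, mem_ball, dist_eq_norm] at hy; exact hy
  have h1 := abs_le.mp (abs_norm_sub_norm_le y (ptm m))
  have h2 : |y 1 - ptm m 1| ≤ ‖y - ptm m‖ := by
    have := abs_apply_le (y - ptm m) 1
    simpa using this
  have h2' := abs_le.mp h2
  have hn := norm_ptm m
  refine ⟨by linarith [h1.1], by linarith [h1.2], ?_⟩
  rw [ptm_apply1] at h2'
  linarith [h2'.1]

lemma Dm_disjoint : Pairwise (Function.onFun Disjoint Dm) := by
  have key : ∀ m n : ℕ, m < n → Disjoint (Dm m) (Dm n) := by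
    intro m n hmn
    rw [Set.disjoint_left]
    intro y hym hyn
    have h1 := (Dm_props hym).1
    have h2 := (Dm_props hyn).2.1
    have hle : Real.exp (-(n:ℝ)) ≤ Real.exp (-(m:ℝ)-1) := by
      apply Real.exp_le_exp.mpr
      have : (m:ℝ) + 1 ≤ (n:ℝ) := by exact_mod_cast hmn
      linarith
    have hee : Real.exp (-(m:ℝ)-1) = Real.exp (-(m:ℝ)) * Real.exp (-1:ℝ) := by
      rw [← Real.exp_add]; ring_nf
    have hexp1 : Real.exp (-1:ℝ) ≤ 5/8 := by
      rw [Real.exp_neg]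
      rw [inv_le_comm₀ (Real.exp_pos 1) (by norm_num)]
      linarith [Real.add_one_le_exp (1:ℝ)]
    have hpos := Real.exp_pos (-(m:ℝ))
    nlinarith
  intro m n hmn
  rcases lt_or_gt_of_ne hmn with h | h
  · exact key m n h
  · exact (key n m h).symm

lemma volume_Dm (m : ℕ) :
    (volume (Dm m)).toReal = π * (Real.exp (-(m:ℝ))/8)^2 := by
  rw [Dm, E2_volume_ball]
  rw [ENNReal.toReal_mul, ENNReal.toReal_pow, ENNReal.toReal_ofReal Real.pi_pos.le,
    ENNReal.toReal_ofReal (by positivity)]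

set_option maxHeartbeats 1000000 in
lemma ball_integral_ge {α : ℝ} (hα0 : 0 ≤ α) {x : E2} (hx1 : 0 < x 1)
    {m : ℕ} (hm : 2 ≤ m) (hxm : 4*‖x‖ ≤ Real.exp (-(m:ℝ))) :
    (1/1000) / ((m:ℝ)+1)^α ≤ ∫ y in Dm m, omegaPlus α y * Kfst (x - y) := by
  have hπ := Real.pi_pos
  have hx0 : 0 < ‖x‖ := norm_pos_iff.mpr (ne_zero_of_snd_pos hx1)
  have hE : (0:ℝ) < Real.exp (-(m:ℝ)) := Real.exp_pos _
  have hMα : (0:ℝ) < ((m:ℝ)+1)^α := Real.rpow_pos_of_pos (by positivity) α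
  set cF : ℝ := (4/(27*π)) * (Real.exp (m:ℝ))^2 / ((m:ℝ)+1)^α with hcF
  have hx1n : x 1 ≤ ‖x‖ := le_trans (le_abs_self _) (abs_apply_le x 1)
  have hpt : ∀ y ∈ Dm m, cF ≤ omegaPlus α y * Kfst (x - y) := by
    intro y hy
    obtain ⟨hy1, hy2, hy3⟩ := Dm_props hy
    have hω : Real.exp (m:ℝ) / ((m:ℝ)+1)^α ≤ omegaPlus α y := by
      apply omegaPlus_ge hα0 m hm ?_ ?_ (by nlinarith)
      · have hee : Real.exp (-(m:ℝ)-1) = Real.exp (-(m:ℝ)) * Real.exp (-1:ℝ) := by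
          rw [← Real.exp_add]; ring_nf
        have hexp1 : Real.exp (-1:ℝ) ≤ 5/8 := by
          rw [Real.exp_neg, inv_le_comm₀ (Real.exp_pos 1) (by norm_num)]
          linarith [Real.add_one_le_exp (1:ℝ)]
        nlinarith
      · nlinarith
    have hsep : (3/8)*Real.exp (-(m:ℝ)) ≤ y 1 - x 1 := by nlinarith
    have hdist : ‖x - y‖^2 ≤ (81/64)*(Real.exp (-(m:ℝ)))^2 := by
      have h1 : ‖x - y‖ ≤ ‖x‖ + ‖y‖ := norm_sub_le x y
      have h2 : ‖x‖ + ‖y‖ ≤ (9/8)*Real.exp (-(m:ℝ)) := by nlinarith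
      nlinarith [norm_nonneg (x - y)]
    have hxy0 : 0 < ‖x - y‖ := by
      have h1 : |(x - y) 1| ≤ ‖x - y‖ := abs_apply_le (x - y) 1
      have h2 : (x - y) 1 = x 1 - y 1 := by simp
      rw [h2] at h1
      have : 0 < |x 1 - y 1| := by rw [abs_sub_comm]; rw [abs_of_pos (by nlinarith)]; nlinarith
      linarith
    have hker : (3/8)*Real.exp (-(m:ℝ)) * (2*π*((81/64)*(Real.exp (-(m:ℝ)))^2))⁻¹
        ≤ Kfst (x - y) := by
      unfold Kfst
      have hsub : -((x - y) 1) = y 1 - x 1 := by simp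
      rw [mul_comm ((2 * π * ‖x-y‖ ^ 2)⁻¹), hsub]
      have hd2 : 2*π*‖x-y‖^2 ≤ 2*π*((81/64)*(Real.exp (-(m:ℝ)))^2) := by nlinarith
      have hinv : (2*π*((81/64)*(Real.exp (-(m:ℝ)))^2))⁻¹ ≤ (2*π*‖x-y‖^2)⁻¹ :=
        inv_anti₀ (by positivity) hd2
      exact mul_le_mul hsep hinv (by positivity) (by linarith)
    have hωpos : (0:ℝ) < Real.exp (m:ℝ) / ((m:ℝ)+1)^α := by positivity
    calc cF = (Real.exp (m:ℝ) / ((m:ℝ)+1)^α)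
          * ((3/8)*Real.exp (-(m:ℝ)) * (2*π*((81/64)*(Real.exp (-(m:ℝ)))^2))⁻¹) := by
          have hEm : (0:ℝ) < Real.exp (m:ℝ) := Real.exp_pos _
          rw [hcF, Real.exp_neg]
          field_simp
          ring
      _ ≤ omegaPlus α y * Kfst (x - y) :=
          mul_le_mul hω hker (by positivity) (omegaPlus_nonneg α y)
  have hineq := setIntegral_ge_of_const_le (μ := volume) (c := cF)
    measurableSet_ball (ne_of_lt measure_ball_lt_top) hpt
    ((integrable_F hα0 x hx0).integrableOn)
  calc (1/1000) / ((m:ℝ)+1)^α ≤ cF * (volume (Dm m)).toReal := by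
        have hEm : (0:ℝ) < Real.exp (m:ℝ) := Real.exp_pos _
        have heq : cF * (π * (Real.exp (-(m:ℝ))/8)^2) = (1/432)/((m:ℝ)+1)^α := by
          rw [hcF, Real.exp_neg]
          field_simp
          ring
        rw [volume_Dm, heq]
        apply (div_le_div_iff_of_pos_right hMα).mpr
        norm_num
    _ ≤ ∫ y in Dm m, omegaPlus α y * Kfst (x - y) := by
        rw [smul_eq_mul, mul_comm] at hineq; exact hineq

set_option maxHeartbeats 2000000 in
lemma vel_lower {α : ℝ} (hα0 : 0 < α) (hα23 : α ≤ 2/3) {x : E2} (hx1 : 0 < x 1)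
    (hxr : ‖x‖ < Real.exp (-(10:ℝ)^20)) :
    (-Real.log ‖x‖)^(1 - α) / 16000 ≤ vel (omegaPlus α) x 0 := by
  have hα0' : (0:ℝ) ≤ α := hα0.le
  have hα1 : α ≤ 1 := by linarith
  have hx0 : 0 < ‖x‖ := norm_pos_iff.mpr (ne_zero_of_snd_pos hx1)
  have hx1n : x 1 ≤ ‖x‖ := le_trans (le_abs_self _) (abs_apply_le x 1)
  set L : ℝ := -Real.log ‖x‖ with hLdef
  have hL : (10:ℝ)^20 < L := by
    have := Real.log_lt_log hx0 hxr
    rw [Real.log_exp] at this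
    rw [hLdef]
    linarith
  have hLbig : (6:ℝ) ≤ L := by
    have h6 : (6:ℝ) ≤ 10^20 := by norm_num
    linarith
  set M : ℕ := ⌊L⌋₊ - 2 with hMdef
  have hfl2 : 2 ≤ ⌊L⌋₊ := by
    apply Nat.le_floor
    push_cast
    linarith
  have hMcast : (M:ℝ) = (⌊L⌋₊ : ℝ) - 2 := by
    rw [hMdef]
    push_cast [Nat.cast_sub hfl2]
    ring
  have hMle : (M:ℝ) ≤ L - 2 := by
    rw [hMcast]
    have := Nat.floor_le (by linarith : (0:ℝ) ≤ L)
    linarith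
  have hMge : L - 3 ≤ (M:ℝ) := by
    rw [hMcast]
    have := Nat.lt_floor_add_one L
    linarith
  have hM2 : 2 ≤ M := by
    have : (2:ℝ) ≤ (M:ℝ) := by linarith
    exact_mod_cast this
  have hMpos : (0:ℝ) < (M:ℝ) := by linarith
  -- the key smallness: for m ≤ M, 4‖x‖ ≤ exp(-m)
  have hxm : ∀ m ∈ Finset.Icc 2 M, 4*‖x‖ ≤ Real.exp (-(m:ℝ)) := by
    intro m hm
    have hmM : (m:ℝ) ≤ (M:ℝ) := by exact_mod_cast (Finset.mem_Icc.mp hm).2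
    have hxeq : ‖x‖ = Real.exp (-L) := by
      rw [hLdef, neg_neg, Real.exp_log hx0]
    rw [hxeq, ← Real.exp_log (show (0:ℝ) < 4 by norm_num), ← Real.exp_add]
    apply Real.exp_le_exp.mpr
    have h4 : Real.log 4 ≤ 2 := by
      have h1 : (4:ℝ) ≤ Real.exp 2 := by
        have he : Real.exp 2 = Real.exp 1 * Real.exp 1 := by rw [← Real.exp_add]; norm_num
        nlinarith [Real.add_one_le_exp (1:ℝ)]
      calc Real.log 4 ≤ Real.log (Real.exp 2) := Real.log_le_log (by norm_num) h1
        _ = 2 := Real.log_exp 2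
    linarith
  set P : Set E2 := ⋃ m ∈ Finset.Icc 2 M, Dm m with hP
  have hPmeas : MeasurableSet P :=
    MeasurableSet.biUnion (Finset.Icc 2 M).countable_toSet (fun _ _ => measurableSet_ball)
  set Q : Set E2 := {y : E2 | x 1 ≤ y 1} with hQ
  have hQmeas : MeasurableSet Q := measurableSet_le measurable_const (meas_eval 1)
  have hPQ : P ⊆ Q := by
    rw [hP]
    intro y hy
    obtain ⟨m, hm, hym⟩ := Set.mem_iUnion₂.mp hy
    have h5 := (Dm_props hym).2.2
    have h4x := hxm m hm
    show x 1 ≤ y 1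
    nlinarith
  set F : E2 → ℝ := fun y => omegaPlus α y * Kfst (x - y) with hF
  have hFint : Integrable F volume := integrable_F hα0' x hx0
  -- decomposition
  have hsplit : ∫ y, F y = (∫ y in P, F y) + ((∫ y in Pᶜ ∩ Q, F y) + ∫ y in Qᶜ, F y) := by
    rw [← integral_add_compl hPmeas hFint]
    congr 1
    have hPc : Pᶜ = (Pᶜ ∩ Q) ∪ Qᶜ := by
      ext y
      constructor
      · intro hy
        rcases Classical.em (y ∈ Q) with h | h
        · exact Or.inl ⟨hy, h⟩
        · exact Or.inr h
      · rintro (⟨h, _⟩ | h)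
        · exact h
        · intro hyP
          exact h (hPQ hyP)
    nth_rewrite 1 [hPc]
    apply setIntegral_union
    · rw [Set.disjoint_iff_inter_eq_empty]
      ext y
      simp only [Set.mem_inter_iff, Set.mem_compl_iff, Set.mem_empty_iff_false, iff_false]
      rintro ⟨⟨_, hq⟩, hqc⟩
      exact hqc hq
    · exact hQmeas.compl
    · exact hFint.integrableOn
    · exact hFint.integrableOn
  -- positivity on Q
  have hQpos : 0 ≤ ∫ y in Pᶜ ∩ Q, F y := by
    apply setIntegral_nonneg (hPmeas.compl.inter hQmeas)
    intro y hy
    have hyQ : x 1 ≤ y 1 := hy.2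
    rw [hF]
    apply mul_nonneg (omegaPlus_nonneg α y)
    unfold Kfst
    have hsub : -((x - y) 1) = y 1 - x 1 := by simp
    rw [hsub]
    have hπ := Real.pi_pos
    apply mul_nonneg (by positivity) (by linarith)
  -- error on Qᶜ
  have hQerr : -25 ≤ ∫ y in Qᶜ, F y := by
    have hQc : Qᶜ = {y : E2 | y 1 < x 1} := by
      ext y
      simp [hQ, not_le]
    have hint : IntegrableOn F Qᶜ volume := hFint.integrableOn
    have habs : |∫ y in Qᶜ, F y| ≤ ∫ y in Qᶜ, |F y| := by
      have := norm_integral_le_integral_norm (μ := volume.restrict Qᶜ) F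
      simpa [Real.norm_eq_abs] using this
    have hlint : ∫ y in Qᶜ, |F y| ≤ 25 := by
      have heq : ENNReal.ofReal (∫ y in Qᶜ, |F y|) = ∫⁻ y in Qᶜ, ENNReal.ofReal |F y| := by
        apply ofReal_integral_eq_lintegral_ofReal hint.abs
        exact Filter.Eventually.of_forall (fun y => abs_nonneg _)
      have hle : ∫⁻ y in Qᶜ, ENNReal.ofReal |F y| ≤ ENNReal.ofReal 25 := by
        rw [hQc]
        exact err_neg_region hα0' hx0 hx1
      rw [← heq] at hle
      have h25 : (0:ℝ) ≤ 25 := by norm_num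
      exact (ENNReal.ofReal_le_ofReal_iff h25).mp hle
    linarith [neg_abs_le (∫ y in Qᶜ, F y), habs, hlint]
  -- sum over balls
  have hsum : (((M:ℝ)-1) * ((1/1000) / ((M:ℝ)+1)^α)) ≤ ∫ y in P, F y := by
    have hdisj : (↑(Finset.Icc 2 M) : Set ℕ).Pairwise (Function.onFun Disjoint Dm) :=
      Dm_disjoint.set_pairwise _
    have heqP : ∫ y in P, F y = ∑ m ∈ Finset.Icc 2 M, ∫ y in Dm m, F y := by
      rw [hP]
      exact integral_biUnion_finset (Finset.Icc 2 M) (fun i _ => measurableSet_ball) hdisj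
        (fun i _ => hFint.integrableOn)
    rw [heqP]
    have hterm : ∀ m ∈ Finset.Icc 2 M, (1/1000) / ((M:ℝ)+1)^α ≤ ∫ y in Dm m, F y := by
      intro m hm
      obtain ⟨hm2, hmM⟩ := Finset.mem_Icc.mp hm
      have h1 : (1/1000) / ((m:ℝ)+1)^α ≤ ∫ y in Dm m, F y :=
        ball_integral_ge hα0' hx1 hm2 (hxm m hm)
      have h2 : ((m:ℝ)+1)^α ≤ ((M:ℝ)+1)^α := by
        apply Real.rpow_le_rpow (by positivity) ?_ hα0'
        have : (m:ℝ) ≤ (M:ℝ) := by exact_mod_cast hmM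
        linarith
      have h3 : (1/1000) / ((M:ℝ)+1)^α ≤ (1/1000) / ((m:ℝ)+1)^α := by
        apply div_le_div_of_nonneg_left (by norm_num) (by positivity) h2
      linarith
    have hcard := Finset.card_nsmul_le_sum (Finset.Icc 2 M) (fun m => ∫ y in Dm m, F y)
      ((1/1000) / ((M:ℝ)+1)^α) hterm
    rw [Nat.card_Icc] at hcard
    have hc2 : ((M + 1 - 2 : ℕ) : ℝ) = (M:ℝ) - 1 := by
      have h1 : M + 1 - 2 = M - 1 := by omega
      rw [h1, Nat.cast_sub (by omega)]
      norm_num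
    rw [nsmul_eq_mul, hc2] at hcard
    exact hcard
  -- final arithmetic
  have hu : vel (omegaPlus α) x 0 = ∫ y, F y := vel_fst_eq hα0' x hx0
  rw [hu, hsplit]
  have hMα : (0:ℝ) < ((M:ℝ)+1)^α := Real.rpow_pos_of_pos (by positivity) α
  have hMαb : (0:ℝ) < (M:ℝ)^α := Real.rpow_pos_of_pos hMpos α
  have hstep1 : ((M:ℝ)+1)^α ≤ 2*(M:ℝ)^α := by
    calc ((M:ℝ)+1)^α ≤ (2*(M:ℝ))^α := by
          apply Real.rpow_le_rpow (by positivity) (by linarith) hα0'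
      _ = 2^α * (M:ℝ)^α := Real.mul_rpow (by norm_num) hMpos.le
      _ ≤ 2 * (M:ℝ)^α := by
          apply mul_le_mul_of_nonneg_right ?_ hMαb.le
          calc (2:ℝ)^α ≤ (2:ℝ)^(1:ℝ) :=
                Real.rpow_le_rpow_of_exponent_le (by norm_num) hα1
            _ = 2 := Real.rpow_one 2
  have hM1ge : (M:ℝ)/2 ≤ (M:ℝ) - 1 := by linarith
  have hMrpow : (M:ℝ)^(1-α) = (M:ℝ)/(M:ℝ)^α := by
    rw [Real.rpow_sub hMpos, Real.rpow_one]
  have hL2 : L/2 ≤ (M:ℝ) := by linarith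
  have hLpow : (L/2)^(1-α) ≤ (M:ℝ)^(1-α) :=
    Real.rpow_le_rpow (by positivity) hL2 (by linarith)
  have hLdiv : (L/2)^(1-α) = L^(1-α)/2^(1-α) :=
    Real.div_rpow (show (0:ℝ) ≤ L by linarith) (show (0:ℝ) ≤ 2 by norm_num) (1-α)
  have h2pow : (2:ℝ)^(1-α) ≤ 2 := by
    calc (2:ℝ)^(1-α) ≤ (2:ℝ)^(1:ℝ) :=
          Real.rpow_le_rpow_of_exponent_le (by norm_num) (by linarith)
      _ = 2 := Real.rpow_one 2
  have hLpos : (0:ℝ) < L^(1-α) := Real.rpow_pos_of_pos (by linarith) _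
  have h2powpos : (0:ℝ) < (2:ℝ)^(1-α) := Real.rpow_pos_of_pos (by norm_num) _
  -- chain: sum ≥ L^{1-α}/8000
  have hchain : L^(1-α)/8000 ≤ ((M:ℝ)-1) * ((1/1000) / ((M:ℝ)+1)^α) := by
    have e1 : ((M:ℝ)/2) * ((1/1000) / (2*(M:ℝ)^α))
        ≤ ((M:ℝ)-1) * ((1/1000) / ((M:ℝ)+1)^α) := by
      apply mul_le_mul hM1ge (div_le_div_of_nonneg_left (by norm_num) hMα hstep1)
        (by positivity) (by linarith)
    have hMne : (M:ℝ) ≠ 0 := ne_of_gt hMpos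
    have hMαne : (M:ℝ)^α ≠ 0 := ne_of_gt hMαb
    have e2 : ((M:ℝ)/2) * ((1/1000) / (2*(M:ℝ)^α)) = (M:ℝ)^(1-α)/4000 := by
      rw [hMrpow]
      field_simp
      ring_nf
    have e3 : L^(1-α)/2 ≤ (M:ℝ)^(1-α) := by
      have : L^(1-α)/2 ≤ L^(1-α)/2^(1-α) := by
        apply div_le_div_of_nonneg_left hLpos.le h2powpos h2pow
      rw [← hLdiv] at this
      linarith [hLpow]
    linarith [e1, e2, e3]
  -- L^{1-α} is big
  have hbig : (400000:ℝ) ≤ L^(1-α) := by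
    have h13 : (1/3:ℝ) ≤ 1-α := by linarith
    have hL1 : (1:ℝ) ≤ L := by linarith
    have s1 : L^((1:ℝ)/3) ≤ L^(1-α) := Real.rpow_le_rpow_of_exponent_le hL1 h13
    have s2 : ((10:ℝ)^18)^((1:ℝ)/3) ≤ L^((1:ℝ)/3) := by
      apply Real.rpow_le_rpow (by positivity) ?_ (by norm_num)
      have h18 : ((10:ℝ)^18) ≤ 10^20 := by norm_num
      linarith
    have s3 : ((10:ℝ)^18)^((1:ℝ)/3) = 10^6 := by
      rw [show ((10:ℝ)^18) = ((10:ℝ)^6)^(3:ℕ) by norm_num]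
      rw [show ((1:ℝ)/3) = (((3:ℕ)):ℝ)⁻¹ by norm_num]
      exact Real.pow_rpow_inv_natCast (by positivity) (by norm_num)
    have h4 : (400000:ℝ) ≤ 10^6 := by norm_num
    linarith [s1, s2, s3]
  linarith [hsum, hQpos, hQerr, hchain, hbig]

lemma key_ineq {α : ℝ} (hα12 : 1/2 < α) (hα23 : α ≤ 2/3) {t : ℝ} (ht : 1 ≤ t) :
    (1:ℝ)/2 ≤ t^(1-α) * (t+1)^(1-2*α) := by
  have h1 : t^((1:ℝ)/3) ≤ t^(1-α) :=
    Real.rpow_le_rpow_of_exponent_le ht (by linarith)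
  have h2 : (t+1)^(-((1:ℝ)/3)) ≤ (t+1)^(1-2*α) :=
    Real.rpow_le_rpow_of_exponent_le (by linarith) (by linarith)
  have h3 : (1:ℝ)/2 ≤ t^((1:ℝ)/3) * (t+1)^(-((1:ℝ)/3)) := by
    have hdiv : t^((1:ℝ)/3) * (t+1)^(-((1:ℝ)/3)) = (t/(t+1))^((1:ℝ)/3) := by
      rw [Real.div_rpow (by linarith) (by linarith), Real.rpow_neg (by linarith),
        div_eq_mul_inv]
      ring
    rw [hdiv]
    have hb : (1/2:ℝ) ≤ t/(t+1) := by
      rw [le_div_iff₀ (by linarith)]; linarith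
    have hhalf : ((1:ℝ)/2) ≤ ((1:ℝ)/2)^((1:ℝ)/3) := by
      have := Real.rpow_le_rpow_of_exponent_ge (by norm_num : (0:ℝ) < 1/2)
        (by norm_num : (1:ℝ)/2 ≤ 1) (by norm_num : (1:ℝ)/3 ≤ 1)
      rwa [Real.rpow_one] at this
    calc (1:ℝ)/2 ≤ ((1:ℝ)/2)^((1:ℝ)/3) := hhalf
      _ ≤ (t/(t+1))^((1:ℝ)/3) := Real.rpow_le_rpow (by norm_num) hb (by norm_num)
  calc (1:ℝ)/2 ≤ t^((1:ℝ)/3) * (t+1)^(-((1:ℝ)/3)) := h3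
    _ ≤ t^(1-α) * (t+1)^(1-2*α) := by
        apply mul_le_mul h1 h2 ?_ ?_
        · exact (Real.rpow_pos_of_pos (by linarith) _).le
        · exact (Real.rpow_pos_of_pos (by linarith) _).le

lemma Dm_subset_ball (m : ℕ) :
    Dm m ⊆ {y : E2 | ‖y‖ < Real.exp (-(m:ℝ)) ∧ 0 < y 1} := by
  intro y hy
  obtain ⟨h1, h2, h3⟩ := Dm_props hy
  have hE := Real.exp_pos (-(m:ℝ))
  exact ⟨by linarith, lt_of_lt_of_le (by positivity) h3⟩

set_option maxHeartbeats 2000000 in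
lemma lintegral_top {α : ℝ} (hα12 : 1/2 < α) (hα23 : α ≤ 2/3) :
    ∫⁻ x in {x : E2 | ‖x‖ < Real.exp (-(10:ℝ)^20) ∧ 0 < x 1},
      ENNReal.ofReal (vel (omegaPlus α) x 0 * omegaPlus α x ^ 2) = ⊤ := by
  have hα0 : (0:ℝ) < α := by linarith
  have hπ := Real.pi_pos
  set N : ℕ := 10^20 with hN
  have hNcast : ((N:ℕ):ℝ) = (10:ℝ)^20 := by rw [hN]; push_cast; norm_num
  set S : Set E2 := {x : E2 | ‖x‖ < Real.exp (-(10:ℝ)^20) ∧ 0 < x 1} with hS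
  set f : E2 → ℝ≥0∞ :=
    fun x => ENNReal.ofReal (vel (omegaPlus α) x 0 * omegaPlus α x ^ 2) with hf
  -- per-ball bound
  have hterm : ∀ k : ℕ,
      ENNReal.ofReal (((1/10^7)/((N:ℝ)+1)) / ((k:ℝ)+1)) ≤ ∫⁻ x in Dm (N+k), f x := by
    intro k
    set n : ℕ := N + k with hn
    have hn2 : 2 ≤ n := by
      rw [hn, hN]
      calc 2 ≤ 10^20 := by norm_num
        _ ≤ 10^20 + k := by omega
    have hn1 : (1:ℝ) ≤ (n:ℝ) := by
      have : (1:ℕ) ≤ n := by omega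
      exact_mod_cast this
    have hE : (0:ℝ) < Real.exp (-(n:ℝ)) := Real.exp_pos _
    have hBα : (0:ℝ) < ((n:ℝ)+1)^α := Real.rpow_pos_of_pos (by linarith) α
    set cn : ℝ := ((n:ℝ)^(1-α)/16000) * (Real.exp (n:ℝ)/((n:ℝ)+1)^α)^2 with hcn
    have hpt : ∀ x ∈ Dm n, cn ≤ vel (omegaPlus α) x 0 * omegaPlus α x ^ 2 := by
      intro x hx
      obtain ⟨hx1, hx2, hx3⟩ := Dm_props hx
      have hx1pos : 0 < x 1 := lt_of_lt_of_le (by positivity) hx3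
      have hxpos : 0 < ‖x‖ := lt_of_lt_of_le (by positivity) hx1
      have hxsmall : ‖x‖ < Real.exp (-(10:ℝ)^20) := by
        have h1 : ‖x‖ < Real.exp (-(n:ℝ)) := by nlinarith
        have h2 : Real.exp (-(n:ℝ)) ≤ Real.exp (-((N:ℕ):ℝ)) := by
          apply Real.exp_le_exp.mpr
          have : ((N:ℕ):ℝ) ≤ (n:ℝ) := by
            have : N ≤ n := by omega
            exact_mod_cast this
          linarith
        rw [hNcast] at h2
        linarith
      have hvel0 := vel_lower hα0 hα23 hx1pos hxsmall
      set L : ℝ := -Real.log ‖x‖ with hL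
      have hLn : (n:ℝ) ≤ L := by
        have : Real.log ‖x‖ ≤ Real.log (Real.exp (-(n:ℝ))) :=
          Real.log_le_log hxpos (by nlinarith)
        rw [Real.log_exp] at this
        rw [hL]; linarith
      have hvel : (n:ℝ)^(1-α)/16000 ≤ vel (omegaPlus α) x 0 := by
        have hmono : (n:ℝ)^(1-α) ≤ L^(1-α) :=
          Real.rpow_le_rpow (by linarith) hLn (by linarith)
        linarith [hvel0]
      have hω : Real.exp (n:ℝ)/((n:ℝ)+1)^α ≤ omegaPlus α x := by
        apply omegaPlus_ge hα0.le n hn2 ?_ ?_ hx1pos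
        · have hee : Real.exp (-(n:ℝ)-1) = Real.exp (-(n:ℝ)) * Real.exp (-1:ℝ) := by
            rw [← Real.exp_add]; ring_nf
          have hexp1 : Real.exp (-1:ℝ) ≤ 5/8 := by
            rw [Real.exp_neg, inv_le_comm₀ (Real.exp_pos 1) (by norm_num)]
            linarith [Real.add_one_le_exp (1:ℝ)]
          nlinarith
        · nlinarith
      have hsq : (Real.exp (n:ℝ)/((n:ℝ)+1)^α)^2 ≤ (omegaPlus α x)^2 :=
        pow_le_pow_left₀ (by positivity) hω 2
      calc cn ≤ (vel (omegaPlus α) x 0) * (omegaPlus α x)^2 := by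
            rw [hcn]
            apply mul_le_mul hvel hsq (by positivity) ?_
            calc (0:ℝ) ≤ (n:ℝ)^(1-α)/16000 := by positivity
              _ ≤ _ := hvel
        _ = vel (omegaPlus α) x 0 * omegaPlus α x ^ 2 := rfl
    -- lintegral lower bound via indicator
    have hlow : ENNReal.ofReal cn * volume (Dm n) ≤ ∫⁻ x in Dm n, f x := by
      have hind : ∀ x : E2, (Dm n).indicator (fun _ => ENNReal.ofReal cn) x ≤ f x := by
        intro x
        rcases Classical.em (x ∈ Dm n) with h | h
        · rw [Set.indicator_of_mem h]
          exact ENNReal.ofReal_le_ofReal (hpt x h)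
        · rw [Set.indicator_of_notMem h]
          exact zero_le
      calc ENNReal.ofReal cn * volume (Dm n)
          = ∫⁻ x, (Dm n).indicator (fun _ => ENNReal.ofReal cn) x := by
            rw [lintegral_indicator (show MeasurableSet (Dm n) from measurableSet_ball),
              setLIntegral_const]
        _ = ∫⁻ x in Dm n, (Dm n).indicator (fun _ => ENNReal.ofReal cn) x := by
            rw [lintegral_indicator (show MeasurableSet (Dm n) from measurableSet_ball)]
            rw [setLIntegral_congr_fun (show MeasurableSet (Dm n) from measurableSet_ball)
              (fun x hx => Set.indicator_of_mem hx _)]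
        _ ≤ ∫⁻ x in Dm n, f x := lintegral_mono hind
    have hvolDm : volume (Dm n) = ENNReal.ofReal (π * (Real.exp (-(n:ℝ))/8)^2) := by
      rw [Dm, E2_volume_ball, ← ENNReal.ofReal_pow (by positivity),
        ← ENNReal.ofReal_mul Real.pi_pos.le]
    -- arithmetic: cn * vol ≥ const/(n+1)
    have harith : ((1/10^7)/((N:ℝ)+1)) / ((k:ℝ)+1) ≤ cn * (π * (Real.exp (-(n:ℝ))/8)^2) := by
      have hB2 : (((n:ℝ)+1)^α)^2 = ((n:ℝ)+1)^(2*α) := by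
        rw [← Real.rpow_natCast (((n:ℝ)+1)^α) 2, ← Real.rpow_mul (by linarith)]
        norm_num
        rw [mul_comm]
      have hkey := key_ineq hα12 hα23 hn1
      have hsplit : ((n:ℝ)+1)^(1-2*α) = ((n:ℝ)+1) / ((n:ℝ)+1)^(2*α) := by
        nth_rewrite 2 [show ((n:ℝ)+1) = ((n:ℝ)+1)^(1:ℝ) from (Real.rpow_one _).symm]
        rw [← Real.rpow_sub (by linarith)]
      have h2α : (0:ℝ) < ((n:ℝ)+1)^(2*α) := Real.rpow_pos_of_pos (by linarith) _
      have hkey2 : (1:ℝ)/(2*((n:ℝ)+1)) ≤ (n:ℝ)^(1-α) / ((n:ℝ)+1)^(2*α) := by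
        rw [hsplit, ← mul_div_assoc, le_div_iff₀ h2α] at hkey
        rw [div_le_div_iff₀ (by positivity) h2α]
        nlinarith [hkey]
      have heq : cn * (π * (Real.exp (-(n:ℝ))/8)^2)
          = (π/1024000) * ((n:ℝ)^(1-α) / ((n:ℝ)+1)^(2*α)) := by
        rw [hcn, Real.exp_neg, ← hB2]
        have hEn : (0:ℝ) < Real.exp (n:ℝ) := Real.exp_pos _
        field_simp
        ring
      rw [heq]
      have hstep : (π/1024000) * ((1:ℝ)/(2*((n:ℝ)+1)))
          ≤ (π/1024000) * ((n:ℝ)^(1-α) / ((n:ℝ)+1)^(2*α)) :=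
        mul_le_mul_of_nonneg_left hkey2 (by positivity)
      refine le_trans ?_ hstep
      -- const/(N+1)/(k+1) ≤ (π/1024000)/(2(n+1))
      have hnk : (n:ℝ) = (N:ℝ) + (k:ℝ) := by rw [hn]; push_cast; ring
      have hexpand : ((N:ℝ)+1)*((k:ℝ)+1) ≥ (n:ℝ)+1 := by
        rw [hnk]
        have hk0 : (0:ℝ) ≤ (k:ℝ) := Nat.cast_nonneg k
        have hN0 : (0:ℝ) ≤ (N:ℝ) := Nat.cast_nonneg N
        nlinarith
      have hpos1 : (0:ℝ) < (n:ℝ)+1 := by linarith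
      have hc1 : ((1/10^7)/((N:ℝ)+1)) / ((k:ℝ)+1) = (1/10^7) / (((N:ℝ)+1)*((k:ℝ)+1)) := by
        rw [div_div]
      rw [hc1]
      calc (1/10^7:ℝ) / (((N:ℝ)+1)*((k:ℝ)+1)) ≤ (1/10^7) / ((n:ℝ)+1) := by
            apply div_le_div_of_nonneg_left (by norm_num) hpos1 hexpand
        _ ≤ (π/1024000) * ((1:ℝ)/(2*((n:ℝ)+1))) := by
            rw [mul_one_div, div_le_div_iff₀ hpos1 (by positivity)]
            nlinarith [Real.pi_gt_three]
    calc ENNReal.ofReal (((1/10^7)/((N:ℝ)+1)) / ((k:ℝ)+1))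
        ≤ ENNReal.ofReal (cn * (π * (Real.exp (-(n:ℝ))/8)^2)) :=
          ENNReal.ofReal_le_ofReal harith
      _ = ENNReal.ofReal cn * ENNReal.ofReal (π * (Real.exp (-(n:ℝ))/8)^2) := by
          rw [ENNReal.ofReal_mul (by positivity)]
      _ = ENNReal.ofReal cn * volume (Dm n) := by rw [hvolDm]
      _ ≤ ∫⁻ x in Dm n, f x := hlow
  -- union of balls inside S
  have hsubset : (⋃ k, Dm (N+k)) ⊆ S := by
    intro y hy
    obtain ⟨k, hk⟩ := Set.mem_iUnion.mp hy
    have hmem := Dm_subset_ball (N+k) hk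
    constructor
    · have hle : Real.exp (-((N+k:ℕ):ℝ)) ≤ Real.exp (-((N:ℕ):ℝ)) := by
        apply Real.exp_le_exp.mpr
        have h0 : ((N:ℕ):ℝ) ≤ ((N+k:ℕ):ℝ) := by
          have : N ≤ N + k := by omega
          exact_mod_cast this
        linarith
      rw [hNcast] at hle
      show ‖y‖ < Real.exp (-(10:ℝ)^20)
      exact lt_of_lt_of_le hmem.1 hle
    · exact hmem.2
  have hdisjk : Pairwise (Function.onFun Disjoint fun k => Dm (N+k)) := by
    intro i j hij
    exact Dm_disjoint (by omega)
  have hiun : ∫⁻ x in ⋃ k, Dm (N+k), f x = ∑' k, ∫⁻ x in Dm (N+k), f x :=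
    lintegral_iUnion (fun _ => measurableSet_ball) hdisjk f
  have htop : (⊤:ℝ≥0∞) ≤ ∫⁻ x in S, f x := by
    have hhar := tsum_harmonic_top (c := (1/10^7)/((N:ℝ)+1))
      (by positivity)
    calc (⊤:ℝ≥0∞) = ∑' k : ℕ, ENNReal.ofReal (((1/10^7)/((N:ℝ)+1)) / ((k:ℝ)+1)) :=
          hhar.symm
      _ ≤ ∑' k, ∫⁻ x in Dm (N+k), f x := ENNReal.tsum_le_tsum hterm
      _ = ∫⁻ x in ⋃ k, Dm (N+k), f x := hiun.symm
      _ ≤ ∫⁻ x in S, f x := lintegral_mono_set hsubset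
  exact top_le_iff.mp htop


end CubicAux

open CubicAux in
/-- for `1/2 < α ≤ 2/3` there is `r₀ > 0` such that the first component
`u₁` of `K ∗ ω^α_+` is nonnegative on `B⁺(0;r₀)` and `∫_{B⁺(0;r₀)} u₁ |ω^α_+|² = +∞`;
in particular `(K ∗ ω^α_+) |ω^α_+|²` is not locally integrable on `ℝ²`. -/
theorem cubic_term_not_locally_integrable (α : ℝ) (hα1 : 1/2 < α) (hα2 : α ≤ 2/3) :
    ∃ r0 : ℝ, 0 < r0 ∧
      (∀ x : E2, ‖x‖ < r0 → 0 < x 1 → 0 ≤ vel (omegaPlus α) x 0) ∧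
      (∫⁻ x in {x : E2 | ‖x‖ < r0 ∧ 0 < x 1},
          ENNReal.ofReal (vel (omegaPlus α) x 0 * omegaPlus α x ^ 2) = ⊤) ∧
      ¬ LocallyIntegrable (fun x => omegaPlus α x ^ 2 • vel (omegaPlus α) x) volume := by
  have hα0 : (0:ℝ) < α := by linarith
  refine ⟨Real.exp (-(10:ℝ)^20), Real.exp_pos _, ?_, ?_, ?_⟩
  · intro x hxr hx1
    have h := vel_lower hα0 hα2 hx1 hxr
    have hx0 : 0 < ‖x‖ := norm_pos_iff.mpr (ne_zero_of_snd_pos hx1)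
    have hlog : Real.log ‖x‖ < 0 := by
      have := Real.log_lt_log hx0 hxr
      rw [Real.log_exp] at this
      have h20 : (0:ℝ) < (10:ℝ)^20 := by positivity
      linarith
    have hL : (0:ℝ) ≤ (-Real.log ‖x‖)^(1-α) := Real.rpow_nonneg (by linarith) _
    linarith
  · exact lintegral_top hα1 hα2
  · intro hloc
    set G : E2 → E2 := fun x => omegaPlus α x ^ 2 • vel (omegaPlus α) x with hG
    have hcomp : IntegrableOn G (closedBall (0:E2) (Real.exp (-(10:ℝ)^20))) volume :=
      hloc.integrableOn_isCompact (isCompact_closedBall _ _)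
    set S : Set E2 := {x : E2 | ‖x‖ < Real.exp (-(10:ℝ)^20) ∧ 0 < x 1} with hSdef
    have hSsub : S ⊆ closedBall (0:E2) (Real.exp (-(10:ℝ)^20)) := by
      intro x hx
      rw [mem_closedBall, dist_zero_right]
      exact hx.1.le
    have hSint : IntegrableOn G S volume := hcomp.mono_set hSsub
    have hfin : ∫⁻ x in S, ENNReal.ofReal ‖G x‖ < ⊤ := by
      have h2 := hSint.2
      rwa [hasFiniteIntegral_iff_norm] at h2
    have hptw : ∀ x : E2, ENNReal.ofReal (vel (omegaPlus α) x 0 * omegaPlus α x ^ 2)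
        ≤ ENNReal.ofReal ‖G x‖ := by
      intro x
      apply ENNReal.ofReal_le_ofReal
      have h1 : (G x) 0 = omegaPlus α x ^ 2 * vel (omegaPlus α) x 0 := by
        rw [hG]
        simp
      calc vel (omegaPlus α) x 0 * omegaPlus α x ^ 2 = (G x) 0 := by rw [h1]; ring
        _ ≤ |(G x) 0| := le_abs_self _
        _ ≤ ‖G x‖ := abs_apply_le (G x) 0
    have hle : (⊤:ℝ≥0∞) ≤ ∫⁻ x in S, ENNReal.ofReal ‖G x‖ := by
      rw [← lintegral_top hα1 hα2]
      exact lintegral_mono hptw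
    exact absurd (lt_of_le_of_lt hle hfin) (lt_irrefl ⊤)
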